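/- Let X follow an inverse two-parameter Weibull distribution invW2(β, λ) with β, λ > 0, so that F(x) = exp(−λ/x^β) for x > 0. Then F is differentiable on (0, +∞) with derivative f(x) = (λβ/x^{β+1}) exp(−λ/x^β), and for every α ≠ 0 and every x > 0 the α-generalized reversed aging intensity function of X equals L̆_α(x) = (αβλ/x^β) · exp(−λα/x^β)/(1 − exp(−λα/x^β)). -/

import Mathlib

/-- The α-generalized reversed aging intensity function. -/
noncomputable def genRAI (F f : ℝ → ℝ) (α x : ℝ) : ℝ :=
  if α = 0 then -(x * f x) / (F x * Real.log (F x))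
  else α * x * F x ^ (α - 1) * f x / (1 - F x ^ α)

/-- If `X ∼ invW2(β, λ)`, i.e. `F(x) = exp(-λ/x^β)` for `x > 0` with `β, λ > 0`, then
`F` is differentiable on `(0,∞)` with derivative `f(x) = (λβ/x^(β+1)) exp(-λ/x^β)`,
and for every `α ≠ 0` and `x > 0` its α-generalized reversed aging intensity equals
`L̆_α(x) = (αβλ/x^β) · exp(-λα/x^β)/(1 - exp(-λα/x^β))`. -/
theorem stmt_12 (β lam : ℝ) (hβ : 0 < β) (hlam : 0 < lam) (F f : ℝ → ℝ)
    (hF : ∀ x > (0:ℝ), F x = Real.exp (-lam / x ^ β))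
    (hf : ∀ x > (0:ℝ), f x = lam * β / x ^ (β + 1) * Real.exp (-lam / x ^ β)) :
    (∀ x > (0:ℝ), HasDerivAt F (f x) x) ∧
    ∀ α : ℝ, α ≠ 0 → ∀ x > (0:ℝ), genRAI F f α x =
      α * β * lam / x ^ β *
        (Real.exp (-(lam * α) / x ^ β) / (1 - Real.exp (-(lam * α) / x ^ β))) := by
  constructor
  · intro x hx
    have hx' : x ≠ 0 := ne_of_gt hx
    have hne : x ^ β ≠ 0 := (Real.rpow_pos_of_pos hx β).ne'
    have hb : HasDerivAt (fun y : ℝ => y ^ β) (β * x ^ (β - 1)) x :=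
      Real.hasDerivAt_rpow_const (Or.inl hx')
    have h2 := ((hb.inv hne).const_mul (-lam))
    have hval : -lam * (-(β * x ^ (β - 1)) / (x ^ β) ^ 2) = lam * β / x ^ (β + 1) := by
      have hsq : (x ^ β) ^ 2 = x ^ (β + 1) * x ^ (β - 1) := by
        rw [sq, ← Real.rpow_add hx, ← Real.rpow_add hx]; ring_nf
      have h1ne : x ^ (β + 1) ≠ 0 := (Real.rpow_pos_of_pos hx _).ne'
      have h2ne : x ^ (β - 1) ≠ 0 := (Real.rpow_pos_of_pos hx _).ne'
      rw [hsq]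
      field_simp
    have h3 : HasDerivAt (fun y : ℝ => -lam / y ^ β) (lam * β / x ^ (β + 1)) x := by
      have : (fun y : ℝ => -lam * (y ^ β)⁻¹) = fun y : ℝ => -lam / y ^ β := by
        funext y; rw [div_eq_mul_inv]
      rw [← hval]
      simpa [this, div_eq_mul_inv, neg_mul] using h2
    have hE := h3.exp
    have heq : F =ᶠ[nhds x] fun y => Real.exp (-lam / y ^ β) := by
      filter_upwards [Ioi_mem_nhds hx] with y hy using hF y hy
    have := hE.congr_of_eventuallyEq heq
    rw [hf x hx]
    simpa [mul_comm] using this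
  · intro α hα x hx
    have hx' : x ≠ 0 := ne_of_gt hx
    have hpow : x ^ (β + 1) = x ^ β * x := by
      rw [Real.rpow_add hx, Real.rpow_one]
    have hbne : x ^ β ≠ 0 := (Real.rpow_pos_of_pos hx β).ne'
    set t : ℝ := -lam / x ^ β with ht
    have hexp : ∀ c : ℝ, Real.exp t ^ c = Real.exp (t * c) := fun c =>
      (Real.exp_mul t c).symm
    have htα : -(lam * α) / x ^ β = t * α := by rw [ht]; ring
    rw [genRAI, if_neg hα, hF x hx, hf x hx, htα, hexp, hexp]
    have hnum : α * x * Real.exp (t * (α - 1)) * (lam * β / x ^ (β + 1) * Real.exp t)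
        = α * β * lam / x ^ β * Real.exp (t * α) := by
      have : Real.exp (t * (α - 1)) * Real.exp t = Real.exp (t * α) := by
        rw [← Real.exp_add]; ring_nf
      rw [hpow]
      field_simp
      linear_combination (norm := ring_nf) this
    rw [← mul_div_assoc, ← hnum]
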